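/- Assume 𝔟 > ω₁ (the bounding number exceeds ω₁). Then for every almost disjoint family {A_ξ : ξ < ω₁} of infinite subsets of ℕ there exists a ⊆*-increasing sequence (V_α)_{α<ω₁} of subsets of ℕ such that A_ξ ⊆* V_α for all ξ < α < ω₁, and A_ξ ∩ V_α is finite for all α ≤ ξ < ω₁. -/

import Mathlib

noncomputable section

/-- The first uncountable ordinal `ω₁`. -/
def omega1 : Ordinal := (Cardinal.aleph 1).ord

/-- The bounding number `𝔟`: the least cardinality of a family of functions
`ℕ → ℕ` unbounded in the order of eventual pointwise domination. -/
def bInvariant : Cardinal :=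
  sInf { c : Cardinal | ∃ F : Set (ℕ → ℕ), c = Cardinal.mk ↥F ∧
      ¬ ∃ g : ℕ → ℕ, ∀ f ∈ F, ∀ᶠ n in Filter.atTop, f n ≤ g n }

open Cardinal Set Filter

universe v u

lemma lift_aleph_one : Cardinal.lift.{v} (Cardinal.aleph 1 : Cardinal.{0}) =
    (Cardinal.aleph 1 : Cardinal.{v}) := by
  rw [Cardinal.lift_aleph, Ordinal.lift_one]

/-- Any family of functions of size at most `ℵ₁ < 𝔟` is eventually dominated. -/
lemma bound_of_small {ι : Type v} (hb : Cardinal.aleph 1 < bInvariant)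
    (hι : Cardinal.mk ι ≤ (Cardinal.aleph 1 : Cardinal.{v})) (f : ι → ℕ → ℕ) :
    ∃ g : ℕ → ℕ, ∀ i, ∀ᶠ n in Filter.atTop, f i n ≤ g n := by
  by_contra h
  push_neg at h
  have hmem : bInvariant ≤ Cardinal.mk ↥(Set.range f) := by
    apply csInf_le'
    refine ⟨Set.range f, rfl, ?_⟩
    rintro ⟨g, hg⟩
    obtain ⟨i, hi⟩ := h g
    exact hi ((hg (f i) (Set.mem_range_self i)).mono fun n hn => not_lt.mpr hn)
  have h2 : Cardinal.lift.{v} (Cardinal.mk ↥(Set.range f)) ≤ Cardinal.lift.{0} (Cardinal.mk ι) :=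
    Cardinal.mk_range_le_lift
  rw [Cardinal.lift_uzero] at h2
  have h3 : Cardinal.lift.{v} (Cardinal.mk ↥(Set.range f)) ≤
      Cardinal.lift.{v} (Cardinal.aleph 1 : Cardinal.{0}) := by
    rw [lift_aleph_one]; exact h2.trans hι
  rw [Cardinal.lift_le] at h3
  exact absurd (hmem.trans h3) (not_le.mpr hb)

/-- van Douwen's separation lemma: a countable family `B` can be separated from a family `C`
of size `≤ ℵ₁ < 𝔟` provided each `B n` is almost disjoint from each `C i`. -/
lemma vanDouwen {ι : Type v} (hb : Cardinal.aleph 1 < bInvariant)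
    (hι : Cardinal.mk ι ≤ (Cardinal.aleph 1 : Cardinal.{v}))
    (B : ℕ → Set ℕ) (C : ι → Set ℕ) (h : ∀ n i, (B n ∩ C i).Finite) :
    ∃ V : Set ℕ, (∀ n, (B n \ V).Finite) ∧ (∀ i, (C i ∩ V).Finite) := by
  set f : ι → ℕ → ℕ := fun i n =>
    ((Finset.range (n + 1)).biUnion (fun m => (h m i).toFinset)).sup id with hf
  have key : ∀ i m n k, m ≤ n → k ∈ B m ∩ C i → k ≤ f i n := by
    intro i m n k hmn hk
    apply Finset.le_sup (f := id)
    exact Finset.mem_biUnion.2 ⟨m, Finset.mem_range.2 (Nat.lt_succ_of_le hmn),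
      (h m i).mem_toFinset.2 hk⟩
  obtain ⟨g, hg⟩ := bound_of_small hb hι f
  refine ⟨⋃ n, {k | k ∈ B n ∧ g n < k}, ?_, ?_⟩
  · intro n
    apply (Set.finite_le_nat (g n)).subset
    intro k hk
    obtain ⟨hkB, hkV⟩ := hk
    by_contra hgt
    exact hkV (Set.mem_iUnion.2 ⟨n, hkB, not_le.mp hgt⟩)
  · intro i
    obtain ⟨N, hN⟩ := Filter.eventually_atTop.1 (hg i)
    have hsub : C i ∩ (⋃ n, {k | k ∈ B n ∧ g n < k}) ⊆
        ⋃ n ∈ Finset.range N, (B n ∩ C i) := by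
      rintro k ⟨hkC, hkV⟩
      obtain ⟨n, hkB, hkg⟩ := Set.mem_iUnion.1 hkV
      refine Set.mem_iUnion₂.2 ⟨n, ?_, hkB, hkC⟩
      rw [Finset.mem_range]
      by_contra hnN
      have h1 : k ≤ f i n := key i n n k le_rfl ⟨hkB, hkC⟩
      have h2 : f i n ≤ g n := hN n (not_lt.mp hnN)
      omega
    exact (Set.Finite.biUnion (Finset.range N).finite_toSet (fun n _ => h n i)).subset hsub

/-- The inductive step: given the values at earlier stages satisfying the invariant,
one can find a suitable set at stage `α`. -/
lemma step (hb : Cardinal.aleph 1 < bInvariant) (A : Ordinal.{u} → Set ℕ)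
    (hAD : ∀ ξ < omega1, ∀ η < omega1, ξ ≠ η → (A ξ ∩ A η).Finite)
    (α : Ordinal.{u}) (hα : α < omega1)
    (W : Ordinal.{u} → Set ℕ)
    (hW : ∀ β, β < α → ∀ ξ, β ≤ ξ → ξ < omega1 → (A ξ ∩ W β).Finite) :
    ∃ V : Set ℕ, (∀ β < α, (W β \ V).Finite) ∧ (∀ ξ < α, (A ξ \ V).Finite) ∧
      (∀ ξ, α ≤ ξ → ξ < omega1 → (A ξ ∩ V).Finite) := by
  rcases eq_or_ne α 0 with rfl | hα0
  · refine ⟨∅, ?_, ?_, ?_⟩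
    · intro β hβ; exact absurd hβ (not_lt_of_ge (zero_le (a := β)))
    · intro ξ hξ; exact absurd hξ (not_lt_of_ge (zero_le (a := ξ)))
    · intro ξ _ _; simp
  · -- `Iio α` is countable and nonempty
    have hcount : Countable ↥(Set.Iio α) := by
      rw [Set.countable_coe_iff, Cardinal.countable_iff_lt_aleph_one, Ordinal.mk_Iio_ordinal]
      have h1 : α.card < Cardinal.aleph 1 := Cardinal.lt_ord.1 hα
      calc Cardinal.lift.{u+1} α.card
          < Cardinal.lift.{u+1} (Cardinal.aleph 1 : Cardinal.{u}) := Cardinal.lift_lt.2 h1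
        _ = Cardinal.aleph 1 := by rw [Cardinal.lift_aleph, Ordinal.lift_one]
    have hne : Nonempty ↥(Set.Iio α) :=
      ⟨⟨0, pos_iff_ne_zero.2 hα0⟩⟩
    obtain ⟨e, he⟩ := exists_surjective_nat ↥(Set.Iio α)
    set B : ℕ → Set ℕ := fun n =>
      if n % 2 = 0 then A (e (n / 2)).1 else W (e (n / 2)).1 with hB
    set S : Set Ordinal.{u} := {ξ | α ≤ ξ ∧ ξ < omega1} with hS
    have hιle : Cardinal.mk ↥S ≤ (Cardinal.aleph 1 : Cardinal.{u+1}) := by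
      have hsub : S ⊆ Set.Iio omega1 := fun ξ hξ => hξ.2
      calc Cardinal.mk ↥S ≤ Cardinal.mk ↥(Set.Iio omega1) :=
            Cardinal.mk_le_mk_of_subset hsub
        _ = Cardinal.lift.{u+1} omega1.card := Ordinal.mk_Iio_ordinal omega1
        _ = Cardinal.aleph 1 := by
            rw [omega1, Cardinal.card_ord, Cardinal.lift_aleph, Ordinal.lift_one]
    have hBC : ∀ n (i : ↥S), (B n ∩ A i.1).Finite := by
      intro n i
      obtain ⟨hai, hiω⟩ := i.2
      have heβ := (e (n / 2)).2
      have hβω : (e (n / 2)).1 < omega1 := heβ.trans hα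
      rw [hB]
      by_cases hpar : n % 2 = 0
      · simp only [hpar, if_true]
        exact hAD _ hβω _ hiω (ne_of_lt (lt_of_lt_of_le heβ hai))
      · simp only [hpar, if_false]
        have := hW (e (n / 2)).1 heβ i.1 (le_of_lt (lt_of_lt_of_le heβ hai)) hiω
        exact (Set.inter_comm _ _ ▸ this)
    obtain ⟨V, hV1, hV2⟩ := vanDouwen hb hιle B (fun i : ↥S => A i.1) hBC
    refine ⟨V, ?_, ?_, ?_⟩
    · intro β hβ
      obtain ⟨m, hm⟩ := he ⟨β, hβ⟩
      have h1 : ¬ ((2 * m + 1) % 2 = 0) := by omega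
      have h2 : (2 * m + 1) / 2 = m := by omega
      have := hV1 (2 * m + 1)
      rw [hB] at this
      simp only [h1, h2, hm, if_false] at this
      exact this
    · intro ξ hξ
      obtain ⟨m, hm⟩ := he ⟨ξ, hξ⟩
      have h1 : (2 * m) % 2 = 0 := by omega
      have h2 : (2 * m) / 2 = m := by omega
      have := hV1 (2 * m)
      rw [hB] at this
      simp only [h1, h2, hm, if_true] at this
      exact this
    · intro ξ hle hξ
      exact hV2 ⟨ξ, hle, hξ⟩

/-- The transfinite recursion producing the tower. -/
def Vrec (A : Ordinal.{u} → Set ℕ) : Ordinal.{u} → Set ℕ :=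
  Ordinal.lt_wf.fix fun α ih =>
    Classical.epsilon fun V : Set ℕ =>
      (∀ β (hβ : β < α), (ih β hβ \ V).Finite) ∧
      (∀ ξ < α, (A ξ \ V).Finite) ∧
      (∀ ξ, α ≤ ξ → ξ < omega1 → (A ξ ∩ V).Finite)

lemma Vrec_eq (A : Ordinal.{u} → Set ℕ) (α : Ordinal.{u}) :
    Vrec A α = Classical.epsilon fun V : Set ℕ =>
      (∀ β (_ : β < α), (Vrec A β \ V).Finite) ∧
      (∀ ξ < α, (A ξ \ V).Finite) ∧
      (∀ ξ, α ≤ ξ → ξ < omega1 → (A ξ ∩ V).Finite) := by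
  rw [Vrec, WellFounded.fix_eq]

lemma Vrec_spec (hb : Cardinal.aleph 1 < bInvariant) (A : Ordinal.{u} → Set ℕ)
    (hAD : ∀ ξ < omega1, ∀ η < omega1, ξ ≠ η → (A ξ ∩ A η).Finite) :
    ∀ α, α < omega1 →
      (∀ β < α, (Vrec A β \ Vrec A α).Finite) ∧ (∀ ξ < α, (A ξ \ Vrec A α).Finite) ∧
      (∀ ξ, α ≤ ξ → ξ < omega1 → (A ξ ∩ Vrec A α).Finite) := by
  intro α
  induction α using Ordinal.induction with
  | h α IH =>
    intro hα
    have hex : ∃ V : Set ℕ, (∀ β (_ : β < α), (Vrec A β \ V).Finite) ∧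
        (∀ ξ < α, (A ξ \ V).Finite) ∧
        (∀ ξ, α ≤ ξ → ξ < omega1 → (A ξ ∩ V).Finite) := by
      obtain ⟨V, h1, h2, h3⟩ := step hb A hAD α hα (fun β => Vrec A β)
        (fun β hβ ξ hle hξ => (IH β hβ (hβ.trans hα)).2.2 ξ hle hξ)
      exact ⟨V, h1, h2, h3⟩
    rw [Vrec_eq]
    exact Classical.epsilon_spec hex

/-- if `𝔟 > ω₁`, then every almost disjoint family `{A_ξ : ξ < ω₁}` of
infinite subsets of `ℕ` admits a `⊆*`-increasing sequence `(V_α)_{α<ω₁}` with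
`A_ξ ⊆* V_α` for `ξ < α` and `A_ξ ∩ V_α` finite for `α ≤ ξ < ω₁`. -/
theorem stmt10 (hb : Cardinal.aleph 1 < bInvariant)
    (A : Ordinal → Set ℕ)
    (hAinf : ∀ ξ < omega1, (A ξ).Infinite)
    (hAD : ∀ ξ < omega1, ∀ η < omega1, ξ ≠ η → (A ξ ∩ A η).Finite) :
    ∃ V : Ordinal → Set ℕ,
      (∀ α < omega1, ∀ β < omega1, α < β → (V α \ V β).Finite) ∧
      (∀ ξ α : Ordinal, ξ < α → α < omega1 → (A ξ \ V α).Finite) ∧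
      (∀ α ξ : Ordinal, α ≤ ξ → ξ < omega1 → (A ξ ∩ V α).Finite) := by
  refine ⟨Vrec A, ?_, ?_, ?_⟩
  · intro α _ β hβ hαβ
    exact (Vrec_spec hb A hAD β hβ).1 α hαβ
  · intro ξ α hξα hα
    exact (Vrec_spec hb A hAD α hα).2.1 ξ hξα
  · intro α ξ hle hξ
    rcases lt_or_ge α omega1 with hα | hα
    · exact (Vrec_spec hb A hAD α hα).2.2 ξ hle hξ
    · exact absurd (hα.trans hle) (not_le.mpr hξ)
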